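/- arXiv:1810.11904 — 3 statements merged into one kernel-verified Lean document; each statement's English description precedes it below -/
import Mathlib

section
/- Let $\theta > 0$. There exists a constant $A(\theta)$ such that for all integers $1 \le i \le n$, $\prod_{j=0}^{i-1} \frac{n-j}{\theta + n - j - 1} \le A(\theta) \left(\frac{\theta + n - 1}{\theta + n - i}\right)^{1-\theta}$. -/
open Real Finset

private lemma bern1 (θ x : ℝ) (hθ : 1 ≤ θ) (hx : 0 < x) :
    (x + 1 - θ) / x ≤ ((x + 1) / x) ^ (1 - θ) := by
  have hx1 : (0:ℝ) < x + 1 := by linarith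
  have hb := one_add_mul_self_le_rpow_one_add (s := -(1/(x+1))) (p := θ)
    (by rw [neg_le, neg_neg]; rw [div_le_one hx1]; linarith) hθ
  have key : (x + 1 - θ) / (x + 1) ≤ (x / (x + 1)) ^ θ := by
    have h1 : 1 + θ * -(1/(x+1)) = (x + 1 - θ) / (x + 1) := by field_simp; ring
    have h2 : 1 + -(1/(x+1)) = x / (x + 1) := by field_simp; ring
    rw [h1, h2] at hb; exact hb
  have hpos : (0:ℝ) < (x + 1) / x := div_pos hx1 hx
  have hrw : ((x + 1) / x) ^ (1 - θ) = (x + 1) / x * (x / (x + 1)) ^ θ := by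
    rw [show (1:ℝ) - θ = 1 + (-θ) by ring, Real.rpow_add hpos, Real.rpow_one,
      Real.rpow_neg hpos.le, ← Real.inv_rpow hpos.le, inv_div]
  rw [hrw]
  calc (x + 1 - θ) / x = (x + 1) / x * ((x + 1 - θ) / (x + 1)) := by
        field_simp
    _ ≤ (x + 1) / x * (x / (x + 1)) ^ θ :=
        mul_le_mul_of_nonneg_left key hpos.le

private lemma bern2 (θ x : ℝ) (hθ0 : 0 < θ) (hθ : θ ≤ 1) (hx : 1 < x) :
    (x + 1 - θ) / x ≤ (x / (x - 1)) ^ (1 - θ) := by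
  have hx0 : (0:ℝ) < x := by linarith
  have hx1 : (0:ℝ) < x - 1 := by linarith
  have hb := one_add_mul_self_le_rpow_one_add (s := 1/(x-1)) (p := 2 - θ)
    (by have : (0:ℝ) < 1/(x-1) := by positivity
        linarith) (by linarith)
  have h1 : 1 + (2 - θ) * (1/(x-1)) = (x + 1 - θ) / (x - 1) := by field_simp; ring
  have h2 : 1 + 1/(x-1) = x / (x - 1) := by field_simp; ring
  rw [h1, h2] at hb
  have hpos : (0:ℝ) < x / (x - 1) := div_pos hx0 hx1
  have hrw : (x / (x - 1)) ^ ((2:ℝ) - θ) = (x / (x - 1)) ^ (1 - θ) * (x / (x - 1)) := by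
    rw [show (2:ℝ) - θ = (1 - θ) + 1 by ring, Real.rpow_add hpos, Real.rpow_one]
  rw [hrw] at hb
  have := mul_le_mul_of_nonneg_right hb (le_of_lt (div_pos hx1 hx0))
  calc (x + 1 - θ) / x = (x + 1 - θ) / (x - 1) * ((x - 1) / x) := by
        field_simp
    _ ≤ (x / (x - 1)) ^ (1 - θ) * (x / (x - 1)) * ((x - 1) / x) := this
    _ = (x / (x - 1)) ^ (1 - θ) := by field_simp

private lemma aux1 (θ : ℝ) (hθ0 : 0 < θ) (hθ : 1 ≤ θ) (n : ℕ) : ∀ i : ℕ, i ≤ n →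
    ∏ j ∈ Finset.range i, ((n : ℝ) - j) / (θ + n - j - 1) ≤
      ((θ + n) / (θ + n - i)) ^ (1 - θ) := by
  intro i
  induction i with
  | zero =>
    intro _
    simp only [Finset.range_zero, Finset.prod_empty, Nat.cast_zero, sub_zero]
    have : θ + (n:ℝ) ≠ 0 := by positivity
    rw [div_self this, Real.one_rpow]
  | succ i ih =>
    intro h
    have hi := ih (by omega)
    have hin : (i:ℝ) + 1 ≤ n := by exact_mod_cast h
    have hx : (0:ℝ) < θ + n - i - 1 := by linarith
    have hx1 : (0:ℝ) < θ + n - i := by linarith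
    have hf : ((n:ℝ) - i) / (θ + n - i - 1) ≤ ((θ + n - i) / (θ + n - i - 1)) ^ (1 - θ) := by
      have := bern1 θ (θ + n - i - 1) hθ hx
      have e1 : θ + (n:ℝ) - i - 1 + 1 - θ = (n:ℝ) - i := by ring
      have e2 : θ + (n:ℝ) - i - 1 + 1 = θ + n - i := by ring
      rwa [e1, e2] at this
    rw [Finset.prod_range_succ]
    have hfn : (0:ℝ) ≤ ((n:ℝ) - i) / (θ + n - i - 1) :=
      div_nonneg (by linarith) hx.le
    calc (∏ j ∈ Finset.range i, ((n : ℝ) - j) / (θ + n - j - 1)) *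
          (((n:ℝ) - i) / (θ + n - i - 1))
        ≤ ((θ + n) / (θ + n - i)) ^ (1 - θ) * ((θ + n - i) / (θ + n - i - 1)) ^ (1 - θ) :=
          mul_le_mul hi hf hfn (Real.rpow_nonneg (div_nonneg (by positivity) hx1.le) _)
      _ = ((θ + n) / (θ + n - (i+1:ℕ))) ^ (1 - θ) := by
          rw [← Real.mul_rpow (div_nonneg (by positivity) hx1.le)
            (div_nonneg hx1.le hx.le)]
          congr 1
          have hc : θ + (n:ℝ) - (i+1:ℕ) = θ + n - i - 1 := by push_cast; ring
          rw [hc]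
          field_simp

private lemma aux2 (θ : ℝ) (hθ0 : 0 < θ) (hθ : θ ≤ 1) (n : ℕ) : ∀ k : ℕ, k + 1 ≤ n →
    ∏ j ∈ Finset.range k, ((n : ℝ) - j) / (θ + n - j - 1) ≤
      ((θ + n - 1) / (θ + n - k - 1)) ^ (1 - θ) := by
  intro k
  induction k with
  | zero =>
    intro h
    have hn : (1:ℝ) ≤ n := by exact_mod_cast h
    simp only [Finset.range_zero, Finset.prod_empty, Nat.cast_zero, sub_zero]
    have : θ + (n:ℝ) - 1 ≠ 0 := ne_of_gt (by linarith)
    rw [div_self this, Real.one_rpow]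
  | succ k ih =>
    intro h
    have hi := ih (by omega)
    have hkn : (k:ℝ) + 2 ≤ n := by exact_mod_cast h
    have hx : (1:ℝ) < θ + n - k - 1 := by linarith
    have hx0 : (0:ℝ) < θ + n - k - 1 := by linarith
    have hx2 : (0:ℝ) < θ + n - k - 2 := by linarith
    have hf : ((n:ℝ) - k) / (θ + n - k - 1) ≤
        ((θ + n - k - 1) / (θ + n - k - 2)) ^ (1 - θ) := by
      have := bern2 θ (θ + n - k - 1) hθ0 hθ hx
      have e1 : θ + (n:ℝ) - k - 1 + 1 - θ = (n:ℝ) - k := by ring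
      have e2 : θ + (n:ℝ) - k - 1 - 1 = θ + n - k - 2 := by ring
      rwa [e1, e2] at this
    rw [Finset.prod_range_succ]
    have hfn : (0:ℝ) ≤ ((n:ℝ) - k) / (θ + n - k - 1) :=
      div_nonneg (by linarith) hx0.le
    have hn1 : (0:ℝ) < θ + n - 1 := by linarith
    calc (∏ j ∈ Finset.range k, ((n : ℝ) - j) / (θ + n - j - 1)) *
          (((n:ℝ) - k) / (θ + n - k - 1))
        ≤ ((θ + n - 1) / (θ + n - k - 1)) ^ (1 - θ) *
            ((θ + n - k - 1) / (θ + n - k - 2)) ^ (1 - θ) :=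
          mul_le_mul hi hf hfn (Real.rpow_nonneg (div_nonneg hn1.le hx0.le) _)
      _ = ((θ + n - 1) / (θ + n - (k+1:ℕ) - 1)) ^ (1 - θ) := by
          rw [← Real.mul_rpow (div_nonneg hn1.le hx0.le)
            (div_nonneg hx0.le hx2.le)]
          congr 1
          have hc : θ + (n:ℝ) - (k+1:ℕ) - 1 = θ + n - k - 2 := by push_cast; ring
          rw [hc]
          field_simp

theorem stmt_4 (θ : ℝ) (hθ : 0 < θ) :
    ∃ A : ℝ, ∀ n i : ℕ, 1 ≤ i → i ≤ n →
      ∏ j ∈ Finset.range i, ((n : ℝ) - j) / (θ + n - j - 1) ≤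
        A * ((θ + n - 1) / (θ + n - i)) ^ (1 - θ) := by
  rcases le_or_gt 1 θ with hθ1 | hθ1
  · refine ⟨1, fun n i h1 hi => ?_⟩
    have hin : (i:ℝ) ≤ n := by exact_mod_cast hi
    have hn : (1:ℝ) ≤ n := by exact_mod_cast h1.trans hi
    have h := aux1 θ hθ hθ1 n i hi
    have hxi : (0:ℝ) < θ + n - i := by linarith
    have hmono : ((θ + n) / (θ + n - i)) ^ (1 - θ) ≤
        ((θ + n - 1) / (θ + n - i)) ^ (1 - θ) :=
      Real.rpow_le_rpow_of_nonpos (div_pos (by linarith) hxi)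
        (by gcongr <;> linarith) (by linarith)
    rw [one_mul]
    exact h.trans hmono
  · refine ⟨1/θ, fun n i h1 hi => ?_⟩
    obtain ⟨k, rfl⟩ : ∃ k, i = k + 1 := ⟨i - 1, by omega⟩
    have hkn : (k:ℝ) + 1 ≤ n := by exact_mod_cast hi
    have h := aux2 θ hθ hθ1.le n k hi
    have hx0 : (0:ℝ) < θ + n - k - 1 := by linarith
    have hf : ((n:ℝ) - k) / (θ + n - k - 1) ≤ 1/θ := by
      rw [div_le_div_iff₀ hx0 hθ]
      nlinarith [mul_nonneg (sub_nonneg.mpr hθ1.le) (by linarith : (0:ℝ) ≤ (n:ℝ) - k - 1)]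
    rw [Finset.prod_range_succ]
    have hfn : (0:ℝ) ≤ ((n:ℝ) - k) / (θ + n - k - 1) :=
      div_nonneg (by linarith) hx0.le
    calc (∏ j ∈ Finset.range k, ((n : ℝ) - j) / (θ + n - j - 1)) *
          (((n:ℝ) - k) / (θ + n - k - 1))
        ≤ ((θ + n - 1) / (θ + n - k - 1)) ^ (1 - θ) * (1/θ) :=
          mul_le_mul h hf hfn
            (Real.rpow_nonneg (div_nonneg (by linarith) hx0.le) _)
      _ = 1/θ * ((θ + n - 1) / (θ + n - (k+1:ℕ))) ^ (1 - θ) := by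
          have hc : θ + (n:ℝ) - (k+1:ℕ) = θ + n - k - 1 := by push_cast; ring
          rw [hc, mul_comm]
end

section
/- For integers $k_1, k_2 \ge 2$ and $n \ge 2$, the sum $\sum_{1 \le i < j \le n} i^{k_1 - 2} j^{k_2 - 2} \gcd(i,j) \le \sum_{i=1}^n \sum_{j=i}^n n^{k_1 + k_2 - 2} \frac{i^{k_1-2}}{j^{k_1}}$; in particular $\sum_{1 \le i < j \le n} i^{k_1-2} j^{k_2-2} \gcd(i,j) = O(n^{k_1+k_2-2} \log^2 n)$. -/
open Finset

lemma lemP (K : ℕ) (x : ℝ) (hx : 0 ≤ x) :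
    x ^ (K+1) + (K+1) * x ^ K ≤ (x+1) ^ (K+1) := by
  induction K with
  | zero => norm_num
  | succ K ih =>
    have h1 : (x+1)^(K+2) = (x+1)^(K+1) * (x+1) := by ring
    have h2 : (x+1)^(K+1) * (x+1) ≥ (x^(K+1) + (K+1)*x^K) * (x+1) := by
      apply mul_le_mul_of_nonneg_right ih (by linarith)
    have hxK : 0 ≤ x ^ K := pow_nonneg hx K
    have hxK1 : 0 ≤ x ^ (K+1) := pow_nonneg hx _
    have : (x^(K+1) + (K+1)*x^K) * (x+1) = x^(K+2) + (K+1)*x^(K+1) + x^(K+1) + (K+1)*x^K := by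
      push_cast; ring
    push_cast at *
    nlinarith

lemma lemQ (K : ℕ) (x : ℝ) (hx : 0 ≤ x) :
    (x+1) ^ (K+1) ≤ x ^ (K+1) + (K+1) * (x+1) ^ K := by
  induction K with
  | zero => simp
  | succ K ih =>
    have h1 : (x+1)^(K+2) = (x+1)^(K+1) * (x+1) := by ring
    have h2 : (x+1)^(K+1) * (x+1) ≤ (x^(K+1) + (K+1)*(x+1)^K) * (x+1) := by
      apply mul_le_mul_of_nonneg_right ih (by linarith)
    have hx1K : 0 ≤ (x+1) ^ (K+1) := pow_nonneg (by linarith) _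
    have hxK1 : 0 ≤ x ^ (K+1) := pow_nonneg hx _
    have h3 : (x^(K+1) + (K+1)*(x+1)^K) * (x+1) = x^(K+2) + x^(K+1) + (K+1)*((x+1)^K*(x+1)) := by
      push_cast; ring
    have h4 : (x+1)^K*(x+1) = (x+1)^(K+1) := by ring
    have h5 : x^(K+1) ≤ (x+1)^(K+1) := pow_le_pow_left₀ hx (by linarith) _
    push_cast at *
    nlinarith
lemma lemA (K m : ℕ) : ∑ a ∈ Icc 1 m, (a:ℝ)^K ≤ (m:ℝ)^(K+1) := by
  calc ∑ a ∈ Icc 1 m, (a:ℝ)^K ≤ ∑ a ∈ Icc 1 m, (m:ℝ)^K := by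
        apply sum_le_sum
        intro a ha
        simp only [mem_Icc] at ha
        exact pow_le_pow_left₀ (by positivity) (by exact_mod_cast ha.2) K
    _ = (Icc 1 m).card * (m:ℝ)^K := by rw [sum_const, nsmul_eq_mul]
    _ ≤ (m:ℝ) * (m:ℝ)^K := by
        apply mul_le_mul_of_nonneg_right _ (by positivity)
        simp [Nat.card_Icc]
    _ = (m:ℝ)^(K+1) := by ring

lemma lemB (K j : ℕ) : (j:ℝ)^(K+1) ≤ ((K:ℝ)+1) * ∑ i ∈ Icc 1 j, (i:ℝ)^K := by
  induction j with
  | zero => simp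
  | succ j ih =>
    rw [Finset.sum_Icc_succ_top (by omega)]
    have hQ := lemQ K (j:ℝ) (by positivity)
    push_cast
    push_cast at ih hQ
    nlinarith [pow_nonneg (show (0:ℝ) ≤ (j:ℝ)+1 by positivity) K]

lemma lemC (K m : ℕ) :
    ((K:ℝ)+1) * ∑ a ∈ Icc 1 m, (a:ℝ)^K * ((m:ℝ) - a) ≤ (m:ℝ)^(K+2) := by
  induction m with
  | zero => simp
  | succ m ih =>
    have key : ∑ a ∈ Icc 1 (m+1), (a:ℝ)^K * (((m:ℝ)+1) - a)
        = (∑ a ∈ Icc 1 m, (a:ℝ)^K * ((m:ℝ) - a)) + ∑ a ∈ Icc 1 m, (a:ℝ)^K := by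
      rw [Finset.sum_Icc_succ_top (by omega)]
      push_cast
      rw [← Finset.sum_add_distrib]
      have : ((m:ℝ)+1)^K * ((m:ℝ)+1-((m:ℝ)+1)) = 0 := by ring
      rw [this, add_zero]
      apply Finset.sum_congr rfl
      intro a _; ring
    have hA := lemA K m
    have hP := lemP (K+1) (m:ℝ) (by positivity)
    push_cast at *
    rw [key]
    nlinarith [pow_nonneg (show (0:ℝ) ≤ (m:ℝ) by positivity) (K+1)]

lemma lemH (n : ℕ) (hn : 1 ≤ n) : ∑ d ∈ Icc 1 n, (1:ℝ)/d ≤ 1 + Real.log n := by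
  induction n with
  | zero => omega
  | succ n ih =>
    rcases Nat.eq_or_lt_of_le hn with h | h
    · simp [← h]
    · have hn1 : 1 ≤ n := by omega
      have ih' := ih hn1
      rw [Finset.sum_Icc_succ_top (by omega)]
      have hpos : (0:ℝ) < n := by exact_mod_cast hn1
      have hlog : (1:ℝ)/((n:ℝ)+1) ≤ Real.log ((n:ℝ)+1) - Real.log n := by
        have hx : (0:ℝ) < (n:ℝ)/((n:ℝ)+1) := by positivity
        have := Real.log_le_sub_one_of_pos hx
        rw [Real.log_div (ne_of_gt hpos) (by positivity)] at this
        have h1 : (n:ℝ)/((n:ℝ)+1) - 1 = -(1/((n:ℝ)+1)) := by field_simp; ring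
        linarith [this, h1 ▸ this]
      push_cast
      linarith

lemma swapIcc (n : ℕ) (F : ℕ → ℕ → ℝ) :
    ∑ i ∈ Icc 1 n, ∑ j ∈ Icc i n, F i j = ∑ j ∈ Icc 1 n, ∑ i ∈ Icc 1 j, F i j := by
  rw [Finset.sum_sigma', Finset.sum_sigma']
  apply Finset.sum_nbij' (fun p => ⟨p.2, p.1⟩) (fun p => ⟨p.2, p.1⟩)
  all_goals simp only [Finset.mem_sigma, mem_Icc]
  · rintro ⟨i, j⟩ h; omega
  · rintro ⟨j, i⟩ h; omega
  · rintro ⟨i, j⟩ h; trivial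
  · rintro ⟨j, i⟩ h; trivial
  · rintro ⟨i, j⟩ h; trivial
lemma gcdEq (n i j : ℕ) (hi : 1 ≤ i) (hin : i ≤ n) (hj : 1 ≤ j) :
    (Nat.gcd i j : ℝ) = ∑ d ∈ Icc 1 n, (if d ∣ i ∧ d ∣ j then (Nat.totient d : ℝ) else 0) := by
  have hg : Nat.gcd i j ≠ 0 := by
    intro h
    rcases Nat.gcd_eq_zero_iff.mp h with ⟨h1, h2⟩
    omega
  have hset : (Icc 1 n).filter (fun d => d ∣ i ∧ d ∣ j) = (Nat.gcd i j).divisors := by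
    ext d
    simp only [mem_filter, mem_Icc, Nat.mem_divisors]
    constructor
    · rintro ⟨⟨h1, h2⟩, hdi, hdj⟩
      exact ⟨Nat.dvd_gcd hdi hdj, hg⟩
    · rintro ⟨hd, -⟩
      have hdi : d ∣ i := hd.trans (Nat.gcd_dvd_left i j)
      have hdj : d ∣ j := hd.trans (Nat.gcd_dvd_right i j)
      have hd1 : 1 ≤ d := Nat.pos_of_dvd_of_pos hdi (by omega)
      exact ⟨⟨hd1, le_trans (Nat.le_of_dvd (by omega) hdi) hin⟩, hdi, hdj⟩
  rw [← Finset.sum_filter, hset]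
  rw [← Nat.cast_sum]
  rw [Nat.sum_totient]

lemma key (K1 K2 n : ℕ) (hn : 1 ≤ n) :
    ∑ i ∈ Icc 1 n, ∑ j ∈ Ioc i n, (i:ℝ)^K1 * (j:ℝ)^K2 * (Nat.gcd i j : ℝ) ≤
    (n:ℝ)^(K1+K2+2) / ((K1:ℝ)+1) * ∑ d ∈ Icc 1 n, (1:ℝ)/d := by
  have step1 : ∑ i ∈ Icc 1 n, ∑ j ∈ Ioc i n, (i:ℝ)^K1 * (j:ℝ)^K2 * (Nat.gcd i j : ℝ)
      = ∑ d ∈ Icc 1 n, ∑ i ∈ Icc 1 n, ∑ j ∈ Ioc i n,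
          (if d ∣ i ∧ d ∣ j then (Nat.totient d : ℝ) * (i:ℝ)^K1 * (j:ℝ)^K2 else 0) := by
    rw [Finset.sum_comm]
    apply Finset.sum_congr rfl
    intro i hi
    rw [Finset.sum_comm]
    apply Finset.sum_congr rfl
    intro j hj
    simp only [mem_Icc] at hi
    simp only [mem_Ioc] at hj
    rw [gcdEq n i j hi.1 hi.2 (by omega), Finset.mul_sum]
    apply Finset.sum_congr rfl
    intro d _
    split <;> ring_nf <;> simp
  rw [step1, Finset.mul_sum]
  apply Finset.sum_le_sum
  intro d hd
  simp only [mem_Icc] at hd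
  obtain ⟨hd1, hdn⟩ := hd
  set m := n / d with hm
  have hdpos : (0:ℝ) < d := by exact_mod_cast hd1
  have hnpos : (0:ℝ) < n := by exact_mod_cast hn
  -- per-i bound
  have b1 : ∀ i ∈ Icc 1 n,
      (∑ j ∈ Ioc i n, (if d ∣ i ∧ d ∣ j then (Nat.totient d : ℝ) * (i:ℝ)^K1 * (j:ℝ)^K2 else 0))
      ≤ (if d ∣ i then (d:ℝ) * ((d:ℝ)*((i/d:ℕ):ℝ))^K1 * (n:ℝ)^K2 * ((m - i/d : ℕ):ℝ) else 0) := by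
    intro i hi
    simp only [mem_Icc] at hi
    by_cases hdi : d ∣ i
    · simp only [hdi, if_true, true_and]
      have hidi : d * (i / d) = i := Nat.mul_div_cancel' hdi
      calc ∑ j ∈ Ioc i n, (if d ∣ j then (Nat.totient d : ℝ) * (i:ℝ)^K1 * (j:ℝ)^K2 else 0)
          = ∑ j ∈ (Ioc i n).filter (fun j => d ∣ j), (Nat.totient d : ℝ) * (i:ℝ)^K1 * (j:ℝ)^K2 := by
            rw [Finset.sum_filter]
        _ ≤ ∑ j ∈ (Ioc i n).filter (fun j => d ∣ j), (d:ℝ) * (i:ℝ)^K1 * (n:ℝ)^K2 := by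
            apply Finset.sum_le_sum
            intro j hj
            simp only [mem_filter, mem_Ioc] at hj
            have h1 : (Nat.totient d : ℝ) ≤ (d:ℝ) := by exact_mod_cast Nat.totient_le d
            have h2 : (j:ℝ)^K2 ≤ (n:ℝ)^K2 := by
              apply pow_le_pow_left₀ (by positivity)
              exact_mod_cast hj.1.2
            have h3 : (0:ℝ) ≤ (i:ℝ)^K1 := by positivity
            have h4 : (0:ℝ) ≤ (j:ℝ)^K2 := by positivity
            have h0 : (0:ℝ) ≤ ((d:ℕ):ℝ) := by positivity
            calc (Nat.totient d : ℝ) * (i:ℝ)^K1 * (j:ℝ)^K2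
                ≤ (d:ℝ) * (i:ℝ)^K1 * (j:ℝ)^K2 := by
                  apply mul_le_mul_of_nonneg_right (mul_le_mul_of_nonneg_right h1 h3) h4
              _ ≤ (d:ℝ) * (i:ℝ)^K1 * (n:ℝ)^K2 := by
                  apply mul_le_mul_of_nonneg_left h2 (by positivity)
        _ = (((Ioc i n).filter (fun j => d ∣ j)).card : ℝ) * ((d:ℝ) * (i:ℝ)^K1 * (n:ℝ)^K2) := by
            rw [Finset.sum_const, nsmul_eq_mul]
        _ ≤ ((m - i/d : ℕ):ℝ) * ((d:ℝ) * (i:ℝ)^K1 * (n:ℝ)^K2) := by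
            apply mul_le_mul_of_nonneg_right _ (by positivity)
            have hcard : ((Ioc i n).filter (fun j => d ∣ j)).card ≤ (Ioc (i/d) m).card := by
              apply Finset.card_le_card_of_injOn (fun j => j / d)
              · intro j hj
                simp only [Finset.mem_coe, mem_filter, mem_Ioc] at hj ⊢
                obtain ⟨⟨hij, hjn⟩, hdj⟩ := hj
                constructor
                · have : d * (j/d) = j := Nat.mul_div_cancel' hdj
                  by_contra hcon
                  push_neg at hcon
                  have : j ≤ i := by
                    calc j = d * (j/d) := (Nat.mul_div_cancel' hdj).symm
                      _ ≤ d * (i/d) := Nat.mul_le_mul_left d hcon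
                      _ = i := hidi
                  omega
                · exact Nat.div_le_div_right hjn
              · intro x hx y hy hxy
                simp only [Finset.coe_filter, Set.mem_setOf_eq] at hx hy
                simp only at hxy
                calc x = d * (x/d) := (Nat.mul_div_cancel' hx.2).symm
                  _ = d * (y/d) := by rw [hxy]
                  _ = y := Nat.mul_div_cancel' hy.2
            calc (((Ioc i n).filter (fun j => d ∣ j)).card : ℝ) ≤ ((Ioc (i/d) m).card : ℝ) := by
                  exact_mod_cast hcard
              _ = ((m - i/d : ℕ):ℝ) := by rw [Nat.card_Ioc]
        _ = (d:ℝ) * ((d:ℝ)*((i/d:ℕ):ℝ))^K1 * (n:ℝ)^K2 * ((m - i/d : ℕ):ℝ) := by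
            rw [show ((d:ℝ)*((i/d:ℕ):ℝ)) = (i:ℝ) by exact_mod_cast congrArg (Nat.cast (R:=ℝ)) hidi]
            ring
    · simp [hdi]
  calc ∑ i ∈ Icc 1 n, ∑ j ∈ Ioc i n, (if d ∣ i ∧ d ∣ j then (Nat.totient d : ℝ) * (i:ℝ)^K1 * (j:ℝ)^K2 else 0)
      ≤ ∑ i ∈ Icc 1 n, (if d ∣ i then (d:ℝ) * ((d:ℝ)*((i/d:ℕ):ℝ))^K1 * (n:ℝ)^K2 * ((m - i/d : ℕ):ℝ) else 0) :=
        Finset.sum_le_sum b1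
    _ = ∑ a ∈ Icc 1 m, (d:ℝ) * ((d:ℝ)*(a:ℝ))^K1 * (n:ℝ)^K2 * ((m - a : ℕ):ℝ) := by
        rw [← Finset.sum_filter]
        apply Finset.sum_nbij' (fun i => i / d) (fun a => d * a)
        · intro i hi
          simp only [mem_filter, mem_Icc] at hi ⊢
          obtain ⟨⟨h1, h2⟩, hdi⟩ := hi
          constructor
          · exact Nat.one_le_div_iff (by omega) |>.mpr (Nat.le_of_dvd (by omega) hdi)
          · exact Nat.div_le_div_right h2
        · intro a ha
          simp only [mem_Icc] at ha
          simp only [mem_filter, mem_Icc]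
          refine ⟨⟨Nat.mul_pos (by omega) ha.1, ?_⟩, dvd_mul_right d a⟩
          calc d * a ≤ d * m := Nat.mul_le_mul_left d ha.2
            _ = m * d := mul_comm _ _
            _ ≤ n := Nat.div_mul_le_self n d
        · intro i hi
          simp only [mem_filter, mem_Icc] at hi
          exact Nat.mul_div_cancel' hi.2
        · intro a ha
          exact Nat.mul_div_cancel_left a (by omega)
        · intro i hi
          simp only [mem_filter, mem_Icc] at hi
          rfl
    _ ≤ (n:ℝ)^(K1+K2+2) / ((K1:ℝ)+1) * (1/(d:ℝ)) := by
        have hsum : ∑ a ∈ Icc 1 m, (d:ℝ) * ((d:ℝ)*(a:ℝ))^K1 * (n:ℝ)^K2 * ((m - a : ℕ):ℝ)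
            = (d:ℝ)^(K1+1) * (n:ℝ)^K2 * ∑ a ∈ Icc 1 m, (a:ℝ)^K1 * ((m:ℝ) - (a:ℝ)) := by
          rw [Finset.mul_sum]
          apply Finset.sum_congr rfl
          intro a ha
          simp only [mem_Icc] at ha
          rw [Nat.cast_sub ha.2]
          rw [mul_pow]
          ring
        rw [hsum]
        have hC := lemC K1 m
        have hK1 : (0:ℝ) < (K1:ℝ)+1 := by positivity
        have hdmn : d * m ≤ n := by
          calc d * m = m * d := mul_comm _ _
            _ ≤ n := Nat.div_mul_le_self n d
        have hdm : (d:ℝ) * (m:ℝ) ≤ (n:ℝ) := by exact_mod_cast hdmn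
        have hmn : (m:ℝ) ≤ (n:ℝ)/(d:ℝ) := by
          rw [le_div_iff₀ hdpos]; nlinarith
        have hm0 : (0:ℝ) ≤ (m:ℝ) := by positivity
        have hbound : (d:ℝ)^(K1+1) * (m:ℝ)^(K1+2) ≤ (n:ℝ)^(K1+2) / (d:ℝ) := by
          have h1 : (d:ℝ)^(K1+1) * (m:ℝ)^(K1+2) = ((d:ℝ)*(m:ℝ))^(K1+1) * (m:ℝ) := by ring
          rw [h1]
          have h2 : ((d:ℝ)*(m:ℝ))^(K1+1) ≤ (n:ℝ)^(K1+1) :=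
            pow_le_pow_left₀ (by positivity) hdm _
          calc ((d:ℝ)*(m:ℝ))^(K1+1) * (m:ℝ) ≤ (n:ℝ)^(K1+1) * ((n:ℝ)/(d:ℝ)) := by
                apply mul_le_mul h2 hmn hm0 (by positivity)
            _ = (n:ℝ)^(K1+2) / (d:ℝ) := by ring
        have h6 : ∑ a ∈ Icc 1 m, (a:ℝ)^K1 * ((m:ℝ) - (a:ℝ)) ≤ (m:ℝ)^(K1+2)/((K1:ℝ)+1) := by
          rw [le_div_iff₀ hK1]
          nlinarith
        have hpow : (n:ℝ)^(K1+K2+2) = (n:ℝ)^K2 * (n:ℝ)^(K1+2) := by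
          rw [← pow_add]
          congr 1
          omega
        calc (d:ℝ)^(K1+1) * (n:ℝ)^K2 * ∑ a ∈ Icc 1 m, (a:ℝ)^K1 * ((m:ℝ) - (a:ℝ))
            ≤ (d:ℝ)^(K1+1) * (n:ℝ)^K2 * ((m:ℝ)^(K1+2)/((K1:ℝ)+1)) := by
              apply mul_le_mul_of_nonneg_left h6 (by positivity)
          _ = ((d:ℝ)^(K1+1) * (m:ℝ)^(K1+2)) * (n:ℝ)^K2 / ((K1:ℝ)+1) := by ring
          _ ≤ ((n:ℝ)^(K1+2)/(d:ℝ)) * (n:ℝ)^K2 / ((K1:ℝ)+1) := by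
              gcongr
          _ = (n:ℝ)^(K1+K2+2) / ((K1:ℝ)+1) * (1/(d:ℝ)) := by
              rw [hpow]; field_simp
lemma rhs_ge (K1 K2 n : ℕ) :
    (n:ℝ)^(K1+K2+2) / ((K1:ℝ)+1) * ∑ d ∈ Icc 1 n, (1:ℝ)/d ≤
    ∑ i ∈ Icc 1 n, ∑ j ∈ Icc i n, (n:ℝ)^(K1+K2+2) * ((i:ℝ)^K1 / (j:ℝ)^(K1+2)) := by
  rw [swapIcc, Finset.mul_sum]
  apply Finset.sum_le_sum
  intro j hj
  simp only [mem_Icc] at hj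
  have hj0 : (0:ℝ) < (j:ℝ) := by exact_mod_cast hj.1
  have hK1 : (0:ℝ) < (K1:ℝ)+1 := by positivity
  have hB := lemB K1 j
  have hrw : ∑ i ∈ Icc 1 j, (n:ℝ)^(K1+K2+2) * ((i:ℝ)^K1 / (j:ℝ)^(K1+2))
      = (n:ℝ)^(K1+K2+2) / (j:ℝ)^(K1+2) * ∑ i ∈ Icc 1 j, (i:ℝ)^K1 := by
    rw [Finset.mul_sum]
    apply Finset.sum_congr rfl
    intro i _
    ring
  rw [hrw]
  have hsum : (j:ℝ)^(K1+1)/((K1:ℝ)+1) ≤ ∑ i ∈ Icc 1 j, (i:ℝ)^K1 := by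
    rw [div_le_iff₀ hK1]
    linarith [hB]
  calc (n:ℝ)^(K1+K2+2) / ((K1:ℝ)+1) * (1/(j:ℝ))
      = (n:ℝ)^(K1+K2+2) / (j:ℝ)^(K1+2) * ((j:ℝ)^(K1+1)/((K1:ℝ)+1)) := by
        field_simp
        ring
    _ ≤ (n:ℝ)^(K1+K2+2) / (j:ℝ)^(K1+2) * ∑ i ∈ Icc 1 j, (i:ℝ)^K1 := by
        apply mul_le_mul_of_nonneg_left hsum (by positivity)

lemma rhs_le (K1 K2 n : ℕ) (hn : 1 ≤ n) :
    ∑ i ∈ Icc 1 n, ∑ j ∈ Icc i n, (n:ℝ)^(K1+K2+2) * ((i:ℝ)^K1 / (j:ℝ)^(K1+2)) ≤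
    (n:ℝ)^(K1+K2+2) * (1 + Real.log n) := by
  rw [swapIcc]
  calc ∑ j ∈ Icc 1 n, ∑ i ∈ Icc 1 j, (n:ℝ)^(K1+K2+2) * ((i:ℝ)^K1 / (j:ℝ)^(K1+2))
      ≤ ∑ j ∈ Icc 1 n, (n:ℝ)^(K1+K2+2) * (1/(j:ℝ)) := by
        apply Finset.sum_le_sum
        intro j hj
        simp only [mem_Icc] at hj
        have hj0 : (0:ℝ) < (j:ℝ) := by exact_mod_cast hj.1
        have hrw : ∑ i ∈ Icc 1 j, (n:ℝ)^(K1+K2+2) * ((i:ℝ)^K1 / (j:ℝ)^(K1+2))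
            = (n:ℝ)^(K1+K2+2) / (j:ℝ)^(K1+2) * ∑ i ∈ Icc 1 j, (i:ℝ)^K1 := by
          rw [Finset.mul_sum]
          exact Finset.sum_congr rfl fun i _ => by ring
        rw [hrw]
        calc (n:ℝ)^(K1+K2+2) / (j:ℝ)^(K1+2) * ∑ i ∈ Icc 1 j, (i:ℝ)^K1
            ≤ (n:ℝ)^(K1+K2+2) / (j:ℝ)^(K1+2) * (j:ℝ)^(K1+1) := by
              apply mul_le_mul_of_nonneg_left (lemA K1 j) (by positivity)
          _ = (n:ℝ)^(K1+K2+2) * (1/(j:ℝ)) := by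
              field_simp
              ring
    _ = (n:ℝ)^(K1+K2+2) * ∑ j ∈ Icc 1 n, (1/(j:ℝ)) := by rw [Finset.mul_sum]
    _ ≤ (n:ℝ)^(K1+K2+2) * (1 + Real.log n) := by
        apply mul_le_mul_of_nonneg_left (lemH n hn) (by positivity)

theorem stmt_6 (k₁ k₂ : ℕ) (hk₁ : 2 ≤ k₁) (hk₂ : 2 ≤ k₂) :
    (∀ n : ℕ, 2 ≤ n →
      ∑ i ∈ Finset.Icc 1 n, ∑ j ∈ Finset.Ioc i n,
          (i : ℝ) ^ (k₁ - 2) * (j : ℝ) ^ (k₂ - 2) * (Nat.gcd i j : ℝ) ≤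
        ∑ i ∈ Finset.Icc 1 n, ∑ j ∈ Finset.Icc i n,
          (n : ℝ) ^ (k₁ + k₂ - 2) * ((i : ℝ) ^ (k₁ - 2) / (j : ℝ) ^ k₁)) ∧
    ∃ C : ℝ, ∀ n : ℕ, 2 ≤ n →
      ∑ i ∈ Finset.Icc 1 n, ∑ j ∈ Finset.Ioc i n,
          (i : ℝ) ^ (k₁ - 2) * (j : ℝ) ^ (k₂ - 2) * (Nat.gcd i j : ℝ) ≤
        C * (n : ℝ) ^ (k₁ + k₂ - 2) * (Real.log n) ^ 2 := by
  set K1 := k₁ - 2 with hK1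
  set K2 := k₂ - 2 with hK2
  have e1 : k₁ = K1 + 2 := by omega
  have e2 : k₂ = K2 + 2 := by omega
  have e3 : k₁ + k₂ - 2 = K1 + K2 + 2 := by omega
  rw [e3, show k₁ = K1 + 2 from e1]
  constructor
  · intro n hn
    exact le_trans (key K1 K2 n (by omega)) (rhs_ge K1 K2 n)
  · refine ⟨4, fun n hn => ?_⟩
    have hn1 : 1 ≤ n := by omega
    have hlog2 : (0.6931471803 : ℝ) < Real.log 2 := Real.log_two_gt_d9
    have hlogn : Real.log 2 ≤ Real.log n := by
      apply Real.log_le_log (by norm_num)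
      exact_mod_cast hn
    set L := Real.log n with hL
    have hL1 : (0.6931471803 : ℝ) ≤ L := by linarith
    have hHnn : (0:ℝ) ≤ ∑ d ∈ Icc 1 n, (1:ℝ)/d := by
      apply Finset.sum_nonneg
      intro d _
      positivity
    have hK1pos : (1:ℝ) ≤ (K1:ℝ)+1 := by
      have : (0:ℝ) ≤ (K1:ℝ) := by positivity
      linarith
    have hpowpos : (0:ℝ) ≤ (n:ℝ)^(K1+K2+2) := by positivity
    calc ∑ i ∈ Icc 1 n, ∑ j ∈ Ioc i n, (i:ℝ)^K1 * (j:ℝ)^K2 * (Nat.gcd i j : ℝ)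
        ≤ (n:ℝ)^(K1+K2+2) / ((K1:ℝ)+1) * ∑ d ∈ Icc 1 n, (1:ℝ)/d := key K1 K2 n hn1
      _ ≤ (n:ℝ)^(K1+K2+2) * ∑ d ∈ Icc 1 n, (1:ℝ)/d := by
          apply mul_le_mul_of_nonneg_right _ hHnn
          rw [div_le_iff₀ (by linarith)]
          nlinarith
      _ ≤ (n:ℝ)^(K1+K2+2) * (1 + L) := by
          apply mul_le_mul_of_nonneg_left (lemH n hn1) hpowpos
      _ ≤ (n:ℝ)^(K1+K2+2) * (4 * L^2) := by
          apply mul_le_mul_of_nonneg_left _ hpowpos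
          nlinarith [sq_nonneg (L - 0.6931471803)]
      _ = 4 * (n:ℝ)^(K1+K2+2) * L^2 := by ring
end

section
/- Define $K(z) = \frac{3}{2} - \frac{1}{2}\left(1 - \frac{1}{z}\right)^2 \log(1-z) - \frac{1}{2}\left(1 + \frac{1}{z}\right)^2 \log(1+z)$ for complex $|z| < 1$, $z \neq 0$. Then $K$ agrees on $\{0 < |z| < 1\}$ with the power series $\sum_{m=1}^\infty \frac{2}{2m(2m+1)(2m+2)} z^{2m}$; equivalently, $(z^2 K(z))''' = \frac{2z}{1-z^2}$ and $K(z) \to 0$ as $z \to 0$. -/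
open Complex

noncomputable def Kfun (z : ℂ) : ℂ :=
  3 / 2 - (1 / 2) * (1 - 1 / z) ^ 2 * Complex.log (1 - z)
    - (1 / 2) * (1 + 1 / z) ^ 2 * Complex.log (1 + z)

theorem stmt_18 (z : ℂ) (hz : ‖z‖ < 1) (hz0 : z ≠ 0) :
    Kfun z = ∑' m : ℕ,
      (2 / ((2 * (m + 1)) * (2 * m + 3) * (2 * m + 4)) : ℂ) * z ^ (2 * (m + 1)) := by
  have hz' : ‖-z‖ < 1 := by rwa [norm_neg]
  have h1 : HasSum (fun n : ℕ ↦ z ^ n / n) (-Complex.log (1 - z)) :=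
    hasSum_taylorSeries_neg_log hz
  have h2 : HasSum (fun n : ℕ ↦ (-z) ^ n / n) (-Complex.log (1 + z)) := by
    have := hasSum_taylorSeries_neg_log hz'
    rwa [sub_neg_eq_add] at this
  set A : ℂ := (-Complex.log (1 - z) + -Complex.log (1 + z)) / 2 with hA
  set L : ℂ := (-Complex.log (1 - z) - -Complex.log (1 + z)) / 2 with hL
  have hE : HasSum (fun n : ℕ ↦ (z ^ n / n + (-z) ^ n / n) / 2) A :=
    (h1.add h2).div_const 2
  have hO : HasSum (fun n : ℕ ↦ (z ^ n / n - (-z) ^ n / n) / 2) L :=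
    (h1.sub h2).div_const 2
  have hEven : HasSum (fun m : ℕ ↦ z ^ (2 * m) / (2 * m : ℕ)) A := by
    have hinj : Function.Injective (fun m : ℕ ↦ 2 * m) := by
      intro a b h
      simp only at h
      omega
    have hvan : ∀ n ∉ Set.range (fun m : ℕ ↦ 2 * m),
        (z ^ n / n + (-z) ^ n / n) / 2 = 0 := by
      intro n hn
      have hodd : Odd n := by
        rcases Nat.even_or_odd n with h | h
        · obtain ⟨r, hr⟩ := h
          exact absurd ⟨r, by simp only; omega⟩ hn
        · exact h
      rw [hodd.neg_pow]
      ring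
    have key : (fun m : ℕ ↦ z ^ (2 * m) / ((2 * m : ℕ) : ℂ)) =
        (fun n : ℕ ↦ (z ^ n / n + (-z) ^ n / n) / 2) ∘ (fun m ↦ 2 * m) := by
      funext m
      simp only [Function.comp_apply]
      rw [Even.neg_pow ⟨m, (two_mul m)⟩]
      ring
    rw [key]
    exact (hinj.hasSum_iff hvan).mpr hE
  have hOdd : HasSum (fun m : ℕ ↦ z ^ (2 * m + 1) / (2 * m + 1 : ℕ)) L := by
    have hinj : Function.Injective (fun m : ℕ ↦ 2 * m + 1) := by
      intro a b h
      simp only at h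
      omega
    have hvan : ∀ n ∉ Set.range (fun m : ℕ ↦ 2 * m + 1),
        (z ^ n / n - (-z) ^ n / n) / 2 = 0 := by
      intro n hn
      have heven : Even n := by
        rcases Nat.even_or_odd n with h | h
        · exact h
        · obtain ⟨r, hr⟩ := h
          exact absurd ⟨r, by simp only; omega⟩ hn
      rw [heven.neg_pow]
      ring
    have key : (fun m : ℕ ↦ z ^ (2 * m + 1) / ((2 * m + 1 : ℕ) : ℂ)) =
        (fun n : ℕ ↦ (z ^ n / n - (-z) ^ n / n) / 2) ∘ (fun m ↦ 2 * m + 1) := by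
      funext m
      simp only [Function.comp_apply]
      rw [Odd.neg_pow ⟨m, by omega⟩]
      ring
    rw [key]
    exact (hinj.hasSum_iff hvan).mpr hO
  have S1 : HasSum (fun m : ℕ ↦ z ^ (2 * m + 2) / (2 * m + 2 : ℕ)) A := by
    have := (hasSum_nat_add_iff (f := fun m : ℕ ↦ z ^ (2 * m) / (2 * m : ℕ)) 1).mpr
      (by simpa using hEven)
    convert this using 2 with m
    · rfl
    · rw [show 2 * (m + 1) = 2 * m + 2 by ring]
  have S3 : HasSum (fun m : ℕ ↦ z ^ (2 * m + 4) / (2 * m + 4 : ℕ)) (A - z ^ 2 / 2) := by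
    have heq : A = (A - z ^ 2 / 2) +
        ∑ i ∈ Finset.range 2, z ^ (2 * i) / ((2 * i : ℕ) : ℂ) := by
      rw [Finset.sum_range_succ, Finset.sum_range_one]
      norm_num
    have := (hasSum_nat_add_iff (f := fun m : ℕ ↦ z ^ (2 * m) / (2 * m : ℕ)) 2).mpr
      (heq ▸ hEven)
    convert this using 2 with m
    · rfl
    · rw [show 2 * (m + 2) = 2 * m + 4 by ring]
  have S2 : HasSum (fun m : ℕ ↦ z ^ (2 * m + 3) / (2 * m + 3 : ℕ)) (L - z) := by
    have heq : L = (L - z) +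
        ∑ i ∈ Finset.range 1, z ^ (2 * i + 1) / ((2 * i + 1 : ℕ) : ℂ) := by
      rw [Finset.sum_range_one]
      norm_num
    have := (hasSum_nat_add_iff (f := fun m : ℕ ↦ z ^ (2 * m + 1) / (2 * m + 1 : ℕ)) 1).mpr
      (heq ▸ hOdd)
    convert this using 2 with m
    · rfl
    · rw [show 2 * (m + 1) + 1 = 2 * m + 3 by ring]
  have hfin : HasSum (fun m : ℕ ↦
      (2 / ((2 * (m + 1)) * (2 * m + 3) * (2 * m + 4)) : ℂ) * z ^ (2 * (m + 1)))
      (A + ((z ^ 2)⁻¹ * (A - z ^ 2 / 2) - 2 * (z⁻¹ * (L - z)))) := by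
    have := (S1.add (((S3.mul_left (z ^ 2)⁻¹)).sub ((S2.mul_left z⁻¹).mul_left 2)))
    convert this using 2 with m
    have h1 : ((2 * m + 2 : ℕ) : ℂ) ≠ 0 := Nat.cast_ne_zero.mpr (by omega)
    have h2 : ((2 * m + 3 : ℕ) : ℂ) ≠ 0 := Nat.cast_ne_zero.mpr (by omega)
    have h3 : ((2 * m + 4 : ℕ) : ℂ) ≠ 0 := Nat.cast_ne_zero.mpr (by omega)
    push_cast at h1 h2 h3 ⊢
    have e0 : 2 * (m + 1) = 2 * m + 2 := by omega
    have e1 : z ^ (2 * m + 4) = z ^ (2 * m + 2) * z ^ 2 := by ring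
    have e2 : z ^ (2 * m + 3) = z ^ (2 * m + 2) * z := by ring
    rw [e0, e1, e2]
    have h1' : 2 * ((m : ℂ) + 1) ≠ 0 := by
      rw [show 2 * ((m : ℂ) + 1) = 2 * m + 2 by ring]; exact h1
    field_simp
    ring
  rw [hfin.tsum_eq, Kfun]
  have h2 : (z : ℂ) ^ 2 ≠ 0 := pow_ne_zero 2 hz0
  rw [hA, hL]
  field_simp
  ring
end
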